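/- Let k ≥ 2 and let L_odd ⊆ ℤ² be the subgroup generated by all vectors (a, k−a) with a odd, 0 ≤ a ≤ k. Then L_odd is transferral-free, i.e., (1, −1) ∉ L_odd. -/

import Mathlib

/-- The lattice generated by all `k`-vectors `(a, k-a)` with `a` odd. -/
def Lodd (k : ℕ) : AddSubgroup (ℤ × ℤ) :=
  AddSubgroup.closure {p : ℤ × ℤ | ∃ a : ℕ, a ≤ k ∧ Odd a ∧ p = ((a : ℤ), (k : ℤ) - (a : ℤ))}

/-- `L_odd` is transferral-free: `(1, -1) ∉ L_odd`. -/
theorem stmt_5 (k : ℕ) (hk : 2 ≤ k) : ((1 : ℤ), (-1 : ℤ)) ∉ Lodd k := by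
  intro hmem
  have key : ∀ p ∈ Lodd k, ((p.1 + p.2 + k * p.1 : ℤ) : ZMod (2 * k)) = 0 := by
    intro p hp
    induction hp using AddSubgroup.closure_induction with
    | mem x hx =>
      obtain ⟨a, _, ⟨m, hm⟩, rfl⟩ := hx
      have h1 : ((a : ℤ) + ((k : ℤ) - a) + (k : ℤ) * a) = (2 * k : ℕ) * m + (2 * k : ℕ) := by
        push_cast [hm]; ring
      show (((a : ℤ) + ((k : ℤ) - a) + (k : ℤ) * a : ℤ) : ZMod (2 * k)) = 0
      rw [h1]
      push_cast
      have h2 : ((2 * k : ℕ) : ZMod (2 * k)) = 0 := ZMod.natCast_self _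
      push_cast at h2
      rw [h2, zero_mul, zero_add]
    | zero => simp
    | add x y _ _ hx hy =>
      have : ((x + y).1 + (x + y).2 + (k : ℤ) * (x + y).1)
          = (x.1 + x.2 + k * x.1) + (y.1 + y.2 + k * y.1) := by
        simp [Prod.fst_add, Prod.snd_add]; ring
      rw [this, Int.cast_add, hx, hy, add_zero]
    | neg x _ hx =>
      have : ((-x).1 + (-x).2 + (k : ℤ) * (-x).1)
          = -(x.1 + x.2 + k * x.1) := by
        simp; ring
      rw [this, Int.cast_neg, hx, neg_zero]
  have h := key _ hmem
  simp at h
  -- h : (k : ZMod (2*k)) = 0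
  have : ((k : ℤ) : ZMod (2 * k)) = 0 := by push_cast; convert h using 2
  rw [ZMod.intCast_zmod_eq_zero_iff_dvd] at this
  have : (2 * k : ℤ) ∣ k := by exact_mod_cast this
  have hk0 : (0 : ℤ) < k := by exact_mod_cast Nat.lt_of_lt_of_le Nat.zero_lt_two hk
  have := Int.le_of_dvd hk0 this
  omega
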